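/- Let X_1,…,X_n ∈ {0,1} be a stochastic process and p_1,…,p_n ∈ [0,1] random variables such that for every t, E[X_t | X_1,…,X_{t−1}, p_1,…,p_t] = p_t. Then for any λ > 0 and any c, Pr[λ·∑_{t=1}^n X_t > (e^λ − 1)·∑_{t=1}^n p_t + c] ≤ e^{−c}. -/

import Mathlib

open Finset MeasureTheory

/-- Chernoff-type bound for adaptively chosen Bernoulli probabilities. -/
theorem stmt_1 {Ω : Type*} [MeasurableSpace Ω] (μ : MeasureTheory.Measure Ω)
    [MeasureTheory.IsProbabilityMeasure μ] (n : ℕ) (X p : Fin n → Ω → ℝ)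
    (hX : ∀ t, Measurable (X t)) (hp : ∀ t, Measurable (p t))
    (hX01 : ∀ t ω, X t ω = 0 ∨ X t ω = 1)
    (hp01 : ∀ t ω, p t ω ∈ Set.Icc (0 : ℝ) 1)
    (hcond : ∀ t : Fin n,
      μ[X t | (⨆ s : Fin n, ⨆ _ : s < t, MeasurableSpace.comap (X s) inferInstance) ⊔
              (⨆ s : Fin n, ⨆ _ : s ≤ t, MeasurableSpace.comap (p s) inferInstance)]
        =ᵐ[μ] p t)
    (lam c : ℝ) (hlam : 0 < lam) :
    μ {ω | lam * ∑ t, X t ω > (Real.exp lam - 1) * ∑ t, p t ω + c}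
      ≤ ENNReal.ofReal (Real.exp (-c)) := by
  rename_i mΩ _
  set q : ℝ := Real.exp lam - 1 with hqdef
  have hq0 : 0 < q := by
    have := Real.add_one_le_exp lam
    simp only [hqdef]; linarith
  -- the basic factor
  set f : Fin n → Ω → ℝ := fun s ω => Real.exp (lam * X s ω - q * p s ω) with hfdef
  have hfmeas : ∀ s, Measurable (f s) := fun s =>
    (((hX s).const_mul lam).sub ((hp s).const_mul q)).exp
  have hfpos : ∀ s ω, 0 < f s ω := fun s ω => Real.exp_pos _
  have hfle : ∀ s ω, f s ω ≤ Real.exp lam := by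
    intro s ω
    apply Real.exp_le_exp.mpr
    have h1 : X s ω ≤ 1 := by rcases hX01 s ω with h | h <;> simp [h]
    have h2 : 0 ≤ p s ω := (hp01 s ω).1
    nlinarith
  -- partial products
  set S : ℕ → Ω → ℝ := fun k ω =>
    ∏ s ∈ Finset.univ.filter (fun s : Fin n => (s : ℕ) < k), f s ω with hSdef
  have hSmeas : ∀ k, Measurable (S k) := fun k =>
    Finset.measurable_prod _ fun s _ => hfmeas s
  have hSnonneg : ∀ k ω, 0 ≤ S k ω := fun k ω =>
    Finset.prod_nonneg fun s _ => (hfpos s ω).le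
  have hexp1 : (1 : ℝ) ≤ Real.exp lam := by
    have := Real.add_one_le_exp lam; linarith
  set C : ℝ := Real.exp lam ^ n with hCdef
  have hSle : ∀ k ω, S k ω ≤ C := by
    intro k ω
    calc S k ω ≤ ∏ _s ∈ Finset.univ.filter (fun s : Fin n => (s : ℕ) < k), Real.exp lam :=
          Finset.prod_le_prod (fun s _ => (hfpos s ω).le) (fun s _ => hfle s ω)
      _ = Real.exp lam ^ (Finset.univ.filter (fun s : Fin n => (s : ℕ) < k)).card := by
          rw [Finset.prod_const]
      _ ≤ Real.exp lam ^ n := by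
          apply pow_le_pow_right₀ hexp1
          calc (Finset.univ.filter (fun s : Fin n => (s : ℕ) < k)).card
              ≤ (Finset.univ : Finset (Fin n)).card := Finset.card_filter_le _ _
            _ = n := by simp
  -- integrability helper
  have hint : ∀ g : Ω → ℝ, Measurable g → (∀ ω, ‖g ω‖ ≤ C) → Integrable g μ := fun g hg hb =>
    Integrable.mono' (integrable_const C) hg.aestronglyMeasurable (ae_of_all _ hb)
  have hC0 : 0 ≤ C := pow_nonneg (by positivity) n
  -- key induction: the expected product stays ≤ 1
  have hkey : ∀ k, k ≤ n → ∫ ω, S k ω ∂μ ≤ 1 := by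
    intro k
    induction k with
    | zero =>
      intro _
      have : S 0 = fun _ => (1 : ℝ) := by
        funext ω
        simp [hSdef]
      rw [this]
      simp
    | succ k ih =>
      intro hk1
      have hkn : k < n := hk1
      have ihk := ih hkn.le
      set t : Fin n := ⟨k, hkn⟩ with htdef
      set m : MeasurableSpace Ω :=
        (⨆ s : Fin n, ⨆ _ : s < t, MeasurableSpace.comap (X s) inferInstance) ⊔
        (⨆ s : Fin n, ⨆ _ : s ≤ t, MeasurableSpace.comap (p s) inferInstance) with hmdef
      have hm : m ≤ mΩ := by
        apply sup_le
        · exact iSup_le fun s => iSup_le fun _ => measurable_iff_comap_le.mp (hX s)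
        · exact iSup_le fun s => iSup_le fun _ => measurable_iff_comap_le.mp (hp s)
      have hXm : ∀ s : Fin n, s < t → Measurable[m] (X s) := by
        intro s hs
        have h1 : MeasurableSpace.comap (X s) inferInstance ≤ m :=
          le_sup_of_le_left (le_iSup_of_le s (le_iSup_of_le hs le_rfl))
        exact (measurable_iff_comap_le.mpr le_rfl).mono h1 le_rfl
      have hpm : ∀ s : Fin n, s ≤ t → Measurable[m] (p s) := by
        intro s hs
        have h1 : MeasurableSpace.comap (p s) inferInstance ≤ m :=
          le_sup_of_le_right (le_iSup_of_le s (le_iSup_of_le hs le_rfl))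
        exact (measurable_iff_comap_le.mpr le_rfl).mono h1 le_rfl
      -- S k is m-measurable
      have hSkm : Measurable[m] (S k) := by
        apply Finset.measurable_prod
        intro s hs
        have hs' : s < t := by
          simp only [Finset.mem_filter] at hs
          exact Fin.lt_def.mpr hs.2
        exact ((((hXm s hs').const_mul lam)).sub ((hpm s (le_of_lt hs')).const_mul q)).exp
      set G : Ω → ℝ := fun ω => S k ω * Real.exp (-(q * p t ω)) with hGdef
      have hGm : Measurable[m] G :=
        hSkm.mul (((hpm t le_rfl).const_mul q).neg.exp)
      have hGmeas : Measurable[mΩ] G := hGm.mono hm le_rfl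
      have hGnonneg : ∀ ω, 0 ≤ G ω := fun ω =>
        mul_nonneg (hSnonneg k ω) (Real.exp_pos _).le
      have hGle : ∀ ω, G ω ≤ C := by
        intro ω
        have h1 : Real.exp (-(q * p t ω)) ≤ 1 := by
          apply Real.exp_le_one_iff.mpr
          have := (hp01 t ω).1
          nlinarith
        calc G ω ≤ S k ω * 1 :=
              mul_le_mul_of_nonneg_left h1 (hSnonneg k ω)
          _ = S k ω := mul_one _
          _ ≤ C := hSle k ω
      have hGint : Integrable G μ := hint G hGmeas fun ω => by
        rw [Real.norm_eq_abs, abs_of_nonneg (hGnonneg ω)]; exact hGle ω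
      -- pointwise decomposition of S (k+1)
      have hsplit : ∀ ω, S (k + 1) ω = G ω + q * (G ω * X t ω) := by
        intro ω
        have hfilter : Finset.univ.filter (fun s : Fin n => (s : ℕ) < k + 1) =
            insert t (Finset.univ.filter (fun s : Fin n => (s : ℕ) < k)) := by
          ext s
          simp only [Finset.mem_filter, Finset.mem_insert, Finset.mem_univ, true_and]
          constructor
          · intro hs
            rcases Nat.lt_succ_iff_lt_or_eq.mp hs with h | h
            · exact Or.inr h
            · exact Or.inl (Fin.ext h)
          · rintro (rfl | hs)
            · exact Nat.lt_succ_self _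
            · exact Nat.lt_succ_of_lt hs
        have hnotmem : t ∉ Finset.univ.filter (fun s : Fin n => (s : ℕ) < k) := by
          simp [htdef]
        have hS1 : S (k + 1) ω = f t ω * S k ω := by
          simp only [hSdef, hfilter]
          rw [Finset.prod_insert hnotmem]
        have hft : f t ω = Real.exp (-(q * p t ω)) * (1 + q * X t ω) := by
          simp only [hfdef]
          rw [sub_eq_add_neg, Real.exp_add, mul_comm]
          congr 1
          rcases hX01 t ω with h | h
          · simp [h]
          · rw [h, mul_one, mul_one, hqdef]
            ring
        rw [hS1, hft]
        ring
      -- integrability of the pieces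
      have hGXle : ∀ ω, ‖G ω * X t ω‖ ≤ C := by
        intro ω
        have h0 : 0 ≤ X t ω := by rcases hX01 t ω with h | h <;> simp [h]
        have h1 : X t ω ≤ 1 := by rcases hX01 t ω with h | h <;> simp [h]
        rw [Real.norm_eq_abs, abs_of_nonneg (mul_nonneg (hGnonneg ω) h0)]
        calc G ω * X t ω ≤ G ω * 1 := mul_le_mul_of_nonneg_left h1 (hGnonneg ω)
          _ = G ω := mul_one _
          _ ≤ C := hGle ω
      have hGXint : Integrable (G * X t) μ :=
        hint _ (hGmeas.mul (hX t)) hGXle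
      have hGpint : Integrable (fun ω => G ω * p t ω) μ := by
        apply hint _ (hGmeas.mul (hp t))
        intro ω
        have h0 := (hp01 t ω).1
        have h1 := (hp01 t ω).2
        rw [Real.norm_eq_abs, Pi.mul_apply, abs_of_nonneg (mul_nonneg (hGnonneg ω) h0)]
        calc G ω * p t ω ≤ G ω * 1 := mul_le_mul_of_nonneg_left h1 (hGnonneg ω)
          _ = G ω := mul_one _
          _ ≤ C := hGle ω
      have hXtint : Integrable (X t) μ := by
        apply hint _ (hX t)
        intro ω
        have h0 : 0 ≤ X t ω := by rcases hX01 t ω with h | h <;> simp [h]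
        have h1 : X t ω ≤ 1 := by rcases hX01 t ω with h | h <;> simp [h]
        rw [Real.norm_eq_abs, abs_of_nonneg h0]
        calc X t ω ≤ 1 := h1
          _ = Real.exp lam ^ 0 := by simp
          _ ≤ Real.exp lam ^ n := pow_le_pow_right₀ hexp1 (Nat.zero_le n)
      -- replace X t by p t under the integral
      have hswap : ∫ ω, G ω * X t ω ∂μ = ∫ ω, G ω * p t ω ∂μ := by
        have h1 : μ[(G * X t) | m] =ᵐ[μ] G * μ[X t | m] :=
          condExp_mul_of_stronglyMeasurable_left hGm.stronglyMeasurable hGXint hXtint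
        have h2 : μ[X t | m] =ᵐ[μ] p t := hcond t
        have h3 : μ[(G * X t) | m] =ᵐ[μ] fun ω => G ω * p t ω := by
          filter_upwards [h1, h2] with ω hω1 hω2
          rw [hω1]
          simp only [Pi.mul_apply]
          rw [hω2]
        calc ∫ ω, G ω * X t ω ∂μ = ∫ ω, (G * X t) ω ∂μ := rfl
          _ = ∫ ω, (μ[(G * X t) | m]) ω ∂μ := (integral_condExp hm).symm
          _ = ∫ ω, G ω * p t ω ∂μ := integral_congr_ae h3
      -- the main chain
      have hGP : ∀ ω, G ω + q * (G ω * p t ω) ≤ S k ω := by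
        intro ω
        have h1 : (1 : ℝ) + q * p t ω ≤ Real.exp (q * p t ω) :=
          by have := Real.add_one_le_exp (q * p t ω); linarith
        have h2 : G ω * (1 + q * p t ω) ≤ G ω * Real.exp (q * p t ω) :=
          mul_le_mul_of_nonneg_left h1 (hGnonneg ω)
        have h3 : G ω * Real.exp (q * p t ω) = S k ω := by
          simp only [hGdef]
          rw [mul_assoc, ← Real.exp_add]
          simp
        calc G ω + q * (G ω * p t ω) = G ω * (1 + q * p t ω) := by ring
          _ ≤ G ω * Real.exp (q * p t ω) := h2
          _ = S k ω := h3
      have hSkint : Integrable (S k) μ := hint _ (hSmeas k) fun ω => by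
        rw [Real.norm_eq_abs, abs_of_nonneg (hSnonneg k ω)]; exact hSle k ω
      calc ∫ ω, S (k + 1) ω ∂μ
          = ∫ ω, (G ω + q * (G ω * X t ω)) ∂μ := by
            apply integral_congr_ae (ae_of_all _ hsplit)
        _ = ∫ ω, G ω ∂μ + ∫ ω, q * (G ω * X t ω) ∂μ :=
            integral_add hGint (hGXint.const_mul q)
        _ = ∫ ω, G ω ∂μ + q * ∫ ω, G ω * X t ω ∂μ := by
            rw [integral_const_mul q _]
        _ = ∫ ω, G ω ∂μ + q * ∫ ω, G ω * p t ω ∂μ := by rw [hswap]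
        _ = ∫ ω, G ω ∂μ + ∫ ω, q * (G ω * p t ω) ∂μ := by
            rw [integral_const_mul q _]
        _ = ∫ ω, (G ω + q * (G ω * p t ω)) ∂μ :=
            (integral_add hGint (hGpint.const_mul q)).symm
        _ ≤ ∫ ω, S k ω ∂μ :=
            integral_mono (hGint.add (hGpint.const_mul q)) hSkint hGP
        _ ≤ 1 := ihk
  -- conclude by Markov's inequality
  have hSn : ∀ ω, S n ω = Real.exp (lam * ∑ s, X s ω - q * ∑ s, p s ω) := by
    intro ω
    have hfull : Finset.univ.filter (fun s : Fin n => (s : ℕ) < n) =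
        (Finset.univ : Finset (Fin n)) :=
      Finset.filter_true_of_mem fun s _ => s.isLt
    simp only [hSdef, hfull, hfdef]
    rw [← Real.exp_sum]
    congr 1
    rw [Finset.sum_sub_distrib, ← Finset.mul_sum, ← Finset.mul_sum]
  have hsubset : {ω | lam * ∑ s, X s ω > q * ∑ s, p s ω + c} ⊆
      {ω | Real.exp c ≤ S n ω} := by
    intro ω hω
    simp only [Set.mem_setOf_eq] at hω ⊢
    rw [hSn ω]
    exact Real.exp_le_exp.mpr (by linarith)
  have hSnint : Integrable (S n) μ := hint _ (hSmeas n) fun ω => by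
    rw [Real.norm_eq_abs, abs_of_nonneg (hSnonneg n ω)]; exact hSle n ω
  have hmarkov := mul_meas_ge_le_integral_of_nonneg
    (ae_of_all μ fun ω => hSnonneg n ω) hSnint (Real.exp c)
  have hec : (0 : ℝ) < Real.exp c := Real.exp_pos c
  set T : ℝ := (μ {x | Real.exp c ≤ S n x}).toReal with hTdef
  have h5 : Real.exp c * T ≤ 1 := le_trans hmarkov (hkey n le_rfl)
  have h4 : T ≤ Real.exp (-c) := by
    rw [Real.exp_neg, ← one_div, le_div_iff₀ hec]
    nlinarith [h5]
  calc μ {ω | lam * ∑ s, X s ω > q * ∑ s, p s ω + c}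
      ≤ μ {x | Real.exp c ≤ S n x} := measure_mono hsubset
    _ = ENNReal.ofReal T := (ENNReal.ofReal_toReal (measure_ne_top μ _)).symm
    _ ≤ ENNReal.ofReal (Real.exp (-c)) := ENNReal.ofReal_le_ofReal h4
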